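/- The hyper-Jacobians are traceless: for 1 ≤ r ≤ n-1, the contraction over a repeated index ζ vanishes: Σ_ζ J^{ρ_{r+1},...,ρ_{n-1},ζ}_{σ_1,...,σ_{r-1},ζ} = 0. -/

import Mathlib

open scoped BigOperators

/-- The Levi-Civita symbol on `n` indices: the sign of `f` if it is a
permutation of `Fin n`, and `0` otherwise. -/
noncomputable def eps (n : ℕ) (f : Fin n → Fin n) : ℝ :=
  if h : Function.Bijective f then ((Equiv.Perm.sign (Equiv.ofBijective f h) : ℤ) : ℝ) else 0

/-- The hyper-Jacobian `J^{ρ_{r+1},…,ρ_n}_{σ_1,…,σ_r}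
  = Σ_{ρ_1,…,ρ_r} ε^{ρ_1,…,ρ_n} ∏_{i=1}^r ψ_{ρ_i σ_i}`. -/
noncomputable def hyperJ (n r : ℕ) (hr : r ≤ n) (ψ : Fin n → Fin n → ℝ)
    (σ : Fin r → Fin n) (ρ : Fin (n - r) → Fin n) : ℝ :=
  ∑ g : Fin r → Fin n,
    eps n (fun i => Fin.append g ρ (Fin.cast (Nat.add_sub_cancel' hr).symm i)) *
      ∏ i, ψ (g i) (σ i)

lemma eps_comp_swap (n : ℕ) (f : Fin n → Fin n) (a b : Fin n) (hab : a ≠ b) :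
    eps n (f ∘ Equiv.swap a b) = - eps n f := by
  unfold eps
  by_cases hf : Function.Bijective f
  · have h2 : Function.Bijective (f ∘ Equiv.swap a b) :=
      hf.comp (Equiv.swap a b).bijective
    rw [dif_pos h2, dif_pos hf]
    have he : Equiv.ofBijective _ h2 = (Equiv.ofBijective f hf) * (Equiv.swap a b) := by
      ext i
      simp [Equiv.Perm.mul_apply]
    rw [he, Equiv.Perm.sign_mul, Equiv.Perm.sign_swap hab]
    push_cast
    ring
  · have h2 : ¬ Function.Bijective (f ∘ Equiv.swap a b) := by
      intro hcon
      have := hcon.comp (Equiv.swap a b).bijective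
      have heq : (f ∘ Equiv.swap a b) ∘ Equiv.swap a b = f := by
        funext i; simp
      rw [heq] at this
      exact hf this
    rw [dif_neg h2, dif_neg hf]
    ring

lemma sum_zero_of_skew (n m : ℕ) (T : Fin n → (Fin (m+1) → Fin n) → ℝ)
    (hT : ∀ ζ g, T (g (Fin.last m)) (Function.update g (Fin.last m) ζ) = - T ζ g) :
    ∑ ζ, ∑ g, T ζ g = 0 := by
  classical
  have hinv : Function.Involutive
      (fun x : Fin n × (Fin (m+1) → Fin n) =>
        (x.2 (Fin.last m), Function.update x.2 (Fin.last m) x.1)) := by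
    intro x
    ext1
    · simp
    · funext i
      by_cases hi : i = Fin.last m
      · subst hi; simp
      · simp [Function.update_of_ne hi]
  have h1 : ∑ x : Fin n × (Fin (m+1) → Fin n), T x.1 x.2 = ∑ ζ, ∑ g, T ζ g :=
    Fintype.sum_prod_type _
  have h2 := Equiv.sum_comp (Function.Involutive.toPerm _ hinv)
    (fun x : Fin n × (Fin (m+1) → Fin n) => T x.1 x.2)
  have h3 : ∀ x : Fin n × (Fin (m+1) → Fin n),
      T ((Function.Involutive.toPerm _ hinv) x).1 ((Function.Involutive.toPerm _ hinv) x).2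
        = - T x.1 x.2 := by
    intro x
    simpa [Function.Involutive.toPerm] using hT x.1 x.2
  rw [Fintype.sum_congr _ _ h3] at h2
  rw [Finset.sum_neg_distrib] at h2
  linarith [h1, h2]

lemma Aeval (n s : ℕ) (h : s + 2 ≤ n) (ρ : Fin (n - (s + 2)) → Fin n)
    (ζ : Fin n) (g : Fin (s+1) → Fin n) (i : Fin n) :
    Fin.append g
      (fun k => (Fin.snoc ρ ζ : Fin (n - (s + 2) + 1) → Fin n)
        (Fin.cast (by have := h; omega : n - (s + 1) = (n - (s + 2)) + 1) k))
      (Fin.cast (Nat.add_sub_cancel' (by have := h; omega : s + 1 ≤ n)).symm i)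
    = if h1 : (i : ℕ) < s + 1 then g ⟨i, h1⟩
      else if h2 : (i : ℕ) < n - 1 then ρ ⟨(i : ℕ) - (s+1), by omega⟩ else ζ := by
  by_cases h1 : (i : ℕ) < s + 1
  · rw [dif_pos h1]
    simp only [Fin.append, Fin.addCases, Fin.cast, h1, dif_pos]
    exact congrArg g (by ext; simp)
  · rw [dif_neg h1]
    by_cases h2 : (i : ℕ) < n - 1
    · rw [dif_pos h2]
      simp only [Fin.append, Fin.addCases, Fin.cast, h1, dif_neg, not_false_iff,
        Fin.snoc, Fin.subNat]
      rw [dif_pos (show ((⟨(i:ℕ) - (s+1), by omega⟩ : Fin (n - (s+2) + 1)) : ℕ) < n - (s+2) by show (i:ℕ)-(s+1) < n-(s+2); omega)]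
      simp
    · rw [dif_neg h2]
      simp only [Fin.append, Fin.addCases, Fin.cast, h1, dif_neg, not_false_iff,
        Fin.snoc, Fin.subNat]
      rw [dif_neg (show ¬ ((⟨(i:ℕ) - (s+1), by omega⟩ : Fin (n - (s+2) + 1)) : ℕ) < n - (s+2) by show ¬ ((i:ℕ)-(s+1) < n-(s+2)); omega)]
      simp

set_option maxHeartbeats 1600000 in
/-- The hyper-Jacobians are traceless: for `1 ≤ r ≤ n-1` (here `r = s+1`),
the contraction of the last upper index with the last lower index vanishes. -/
theorem hyperJ_traceless (n s : ℕ) (h : s + 2 ≤ n)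
    (ψ : Fin n → Fin n → ℝ) (hψ : ∀ μ ν, ψ μ ν = ψ ν μ)
    (σ : Fin s → Fin n) (ρ : Fin (n - (s + 2)) → Fin n) :
    ∑ ζ : Fin n,
      hyperJ n (s + 1) (by omega) ψ (Fin.snoc σ ζ)
        (fun i => (Fin.snoc ρ ζ : Fin (n - (s + 2) + 1) → Fin n)
          (Fin.cast (by omega : n - (s + 1) = (n - (s + 2)) + 1) i)) = 0 := by
  classical
  simp only [hyperJ]
  apply sum_zero_of_skew
  intro ζ g
  have hpq : (⟨s, by omega⟩ : Fin n) ≠ ⟨n-1, by omega⟩ := by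
    simp only [ne_eq, Fin.mk.injEq]
    omega
  have hAeq : (fun i => Fin.append (Function.update g (Fin.last s) ζ)
        (fun k => (Fin.snoc ρ (g (Fin.last s)) : Fin (n - (s + 2) + 1) → Fin n)
          (Fin.cast (by omega : n - (s + 1) = (n - (s + 2)) + 1) k))
        (Fin.cast (Nat.add_sub_cancel' (by omega : s + 1 ≤ n)).symm i))
      = (fun i => Fin.append g
        (fun k => (Fin.snoc ρ ζ : Fin (n - (s + 2) + 1) → Fin n)
          (Fin.cast (by omega : n - (s + 1) = (n - (s + 2)) + 1) k))
        (Fin.cast (Nat.add_sub_cancel' (by omega : s + 1 ≤ n)).symm i))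
        ∘ Equiv.swap (⟨s, by omega⟩ : Fin n) (⟨n-1, by omega⟩ : Fin n) := by
    funext i
    simp only [Function.comp_apply]
    rw [Aeval n s h, Aeval n s h]
    by_cases hip : i = (⟨s, by omega⟩ : Fin n)
    · subst hip
      rw [Equiv.swap_apply_left]
      rw [dif_pos (show ((⟨s, by omega⟩ : Fin n) : ℕ) < s + 1 by simp)]
      rw [dif_neg (show ¬ ((⟨n-1, by omega⟩ : Fin n) : ℕ) < s + 1 by simp; omega)]
      rw [dif_neg (show ¬ ((⟨n-1, by omega⟩ : Fin n) : ℕ) < n - 1 by simp)]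
      have : (⟨(⟨s, by omega⟩ : Fin n), by simp⟩ : Fin (s+1)) = Fin.last s := by
        ext; simp [Fin.last]
      rw [this, Function.update_self]
    · by_cases hiq : i = (⟨n-1, by omega⟩ : Fin n)
      · subst hiq
        rw [Equiv.swap_apply_right]
        rw [dif_neg (show ¬ ((⟨n-1, by omega⟩ : Fin n) : ℕ) < s + 1 by simp; omega)]
        rw [dif_neg (show ¬ ((⟨n-1, by omega⟩ : Fin n) : ℕ) < n - 1 by simp)]
        rw [dif_pos (show ((⟨s, by omega⟩ : Fin n) : ℕ) < s + 1 by simp)]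
        have : (⟨(⟨s, by omega⟩ : Fin n), by simp⟩ : Fin (s+1)) = Fin.last s := by
          ext; simp [Fin.last]
        rw [this]
      · rw [Equiv.swap_apply_of_ne_of_ne hip hiq]
        by_cases h1 : (i : ℕ) < s + 1
        · rw [dif_pos h1, dif_pos h1]
          have hne : (⟨(i : ℕ), h1⟩ : Fin (s+1)) ≠ Fin.last s := by
            simp only [ne_eq, Fin.ext_iff, Fin.val_last]
            intro hcon
            exact hip (by ext; simpa using hcon)
          rw [Function.update_of_ne hne]
        · rw [dif_neg h1, dif_neg h1]
          have h2 : (i : ℕ) < n - 1 := by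
            rcases Nat.lt_or_ge (i : ℕ) (n-1) with h' | h'
            · exact h'
            · exact absurd (by ext; simp; omega : i = (⟨n-1, by omega⟩ : Fin n)) hiq
          rw [dif_pos h2, dif_pos h2]
  rw [hAeq, eps_comp_swap _ _ _ _ hpq]
  rw [Fin.prod_univ_castSucc, Fin.prod_univ_castSucc]
  simp only [Fin.snoc_castSucc, Fin.snoc_last, Function.update_self]
  have hupd : ∀ i : Fin s, Function.update g (Fin.last s) ζ i.castSucc = g i.castSucc :=
    fun i => Function.update_of_ne (Fin.castSucc_lt_last i).ne _ _
  simp only [hupd]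
  rw [hψ ζ (g (Fin.last s))]
  ring
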